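/- The Pontryagin dual of a compact connected monothetic abelian group is isomorphic (as an abstract group) to a subgroup of the additive group ℝ with the discrete topology, equivalently a torsion-free group of rank at most 2^ℵ₀. -/

import Mathlib

open Function Real

section Aux

/-- Evaluation at a point, as a monoid hom on the Pontryagin dual. -/
private noncomputable def PontryaginDual.evalHom {A : Type*} [CommGroup A] [TopologicalSpace A]
    [IsTopologicalGroup A] (x : A) : PontryaginDual A →* Circle where
  toFun χ := χ x
  map_one' := rfl
  map_mul' _ _ := rfl

private lemma exists_injective_linearMap_of_rank_le
    {V W : Type} [AddCommGroup V] [Module ℚ V] [AddCommGroup W] [Module ℚ W]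
    (h : Module.rank ℚ V ≤ Module.rank ℚ W) :
    ∃ L : V →ₗ[ℚ] W, Function.Injective L := by
  classical
  let b := Module.Basis.ofVectorSpace ℚ V
  have h' : Cardinal.mk (Module.Basis.ofVectorSpaceIndex ℚ V) ≤ Module.rank ℚ W := by
    rw [b.mk_eq_rank'']; exact h
  obtain ⟨s, hs, hli⟩ := le_rank_iff_exists_linearIndependent.mp h'
  obtain ⟨e⟩ := Cardinal.eq.mp hs.symm
  have hw : LinearIndependent ℚ fun i : Module.Basis.ofVectorSpaceIndex ℚ V => ((e i : s) : W) :=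
    hli.comp e e.injective
  refine ⟨(Finsupp.linearCombination ℚ fun i => ((e i : s) : W)).comp
    (b.repr : V →ₗ[ℚ] _), ?_⟩
  rw [LinearMap.coe_comp, LinearEquiv.coe_coe]
  exact Function.Injective.comp (linearIndependent_iff_injective_finsuppLinearCombination.mp hw) b.repr.injective

private lemma PontryaginDual.eq_one_of_pow {A : Type*} [CommGroup A] [TopologicalSpace A]
    [IsTopologicalGroup A] [ConnectedSpace A] (χ : PontryaginDual A) {n : ℕ} (hn : n ≠ 0)
    (h : χ ^ n = 1) : χ = 1 := by
  have hx : ∀ x : A, (χ x) ^ n = 1 := by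
    intro x
    have := congrArg (PontryaginDual.evalHom x) h
    rw [map_pow, _root_.map_one] at this; exact this
  -- the set of n-th roots of unity in the circle is finite
  have hfinC : {w : ℂ | w ^ n = 1}.Finite := by
    refine Set.Finite.subset (Polynomial.nthRoots n (1 : ℂ)).toFinset.finite_toSet ?_
    intro w hw
    simp only [Multiset.mem_toFinset, Finset.mem_coe]
    exact (Polynomial.mem_nthRoots (Nat.pos_of_ne_zero hn)).mpr hw
  have hfin : {z : Circle | z ^ n = 1}.Finite := by
    have : {z : Circle | z ^ n = 1} ⊆ (fun z : Circle => (z : ℂ)) ⁻¹' {w : ℂ | w ^ n = 1} := by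
      intro z hz
      simp only [Set.mem_preimage, Set.mem_setOf_eq]
      rw [Set.mem_setOf_eq] at hz
      rw [← Circle.coe_pow z n, hz]
      exact Circle.coe_one
    exact Set.Finite.subset (hfinC.preimage fun z _ w _ hzw => Subtype.ext hzw) this
  -- the continuous map into a finite (hence discrete) set is constant
  haveI : Finite {z : Circle | z ^ n = 1} := hfin.to_subtype
  let F : A → {z : Circle | z ^ n = 1} := fun x => ⟨χ x, hx x⟩
  have hF : Continuous F := Continuous.subtype_mk (map_continuous χ) _
  have hconst : ∀ x : A, F x = F 1 :=
    fun x => (IsLocallyConstant.iff_continuous F).mpr hF |>.apply_eq_of_preconnectedSpace x 1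
  refine ContinuousMonoidHom.ext fun x => ?_
  have := congrArg Subtype.val (hconst x)
  exact this.trans (_root_.map_one χ)

end Aux

/-- The Pontryagin dual of a compact connected monothetic abelian group embeds, as an
abstract group, into the additive group `ℝ` (with the discrete topology). -/
theorem dual_of_compact_connected_monothetic (A : Type*) [CommGroup A] [TopologicalSpace A]
    [IsTopologicalGroup A] [CompactSpace A] [T2Space A] [ConnectedSpace A]
    (hmono : ∃ a : A, Dense ((Subgroup.zpowers a : Subgroup A) : Set A)) :
    ∃ f : PontryaginDual A →* Multiplicative ℝ, Function.Injective f := by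
  classical
  obtain ⟨a, ha⟩ := hmono
  -- evaluation at the generator is injective
  have heval : Function.Injective (PontryaginDual.evalHom (A := A) a) := by
    intro χ ψ hχψ
    have : (χ : A → Circle) = ψ := by
      refine Continuous.ext_on ha (map_continuous χ) (map_continuous ψ) ?_
      rintro x ⟨k, rfl⟩
      simp only [← zpow_natCast]
      rw [map_zpow, map_zpow]
      exact congrArg (· ^ k) hχψ
    exact ContinuousMonoidHom.ext fun x => congrFun this x
  -- quotient of ℝ by the rational span of π
  set W : Submodule ℚ ℝ := Submodule.span ℚ {Real.pi} with hW
  -- the argument map, as a monoid hom into the quotient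
  have hargmul : ∀ x y : Circle,
      (Submodule.Quotient.mk (Complex.arg ((x * y : Circle) : ℂ)) : ℝ ⧸ W) =
        Submodule.Quotient.mk (Complex.arg (x : ℂ)) +
          Submodule.Quotient.mk (Complex.arg (y : ℂ)) := by
    intro x y
    have h1 : (Complex.arg ((x : ℂ) * (y : ℂ)) : Real.Angle) =
        Complex.arg (x : ℂ) + Complex.arg (y : ℂ) :=
      Complex.arg_mul_coe_angle x.coe_ne_zero y.coe_ne_zero
    rw [← Real.Angle.coe_add] at h1
    obtain ⟨k, hk⟩ := Real.Angle.angle_eq_iff_two_pi_dvd_sub.mp h1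
    rw [← Submodule.Quotient.mk_add, Submodule.Quotient.eq]
    have hmem : Complex.arg ((x : ℂ) * (y : ℂ)) -
        (Complex.arg (x : ℂ) + Complex.arg (y : ℂ)) ∈ W := by
      rw [hk, hW]
      rw [Submodule.mem_span_singleton]
      exact ⟨2 * k, by rw [Rat.smul_def]; push_cast; ring⟩
    simpa using hmem
  let q : Circle →* Multiplicative (ℝ ⧸ W) :=
    MonoidHom.mk' (fun z => Multiplicative.ofAdd
      (Submodule.Quotient.mk (Complex.arg (z : ℂ)))) (by
        intro x y
        simpa using congrArg Multiplicative.ofAdd (hargmul x y))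
  -- an injective linear map from the quotient into ℝ
  obtain ⟨L, hL⟩ := exists_injective_linearMap_of_rank_le
    (V := ℝ ⧸ W) (W := ℝ) (rank_quotient_le W)
  let L' : Multiplicative (ℝ ⧸ W) →* Multiplicative ℝ :=
    AddMonoidHom.toMultiplicative L.toAddMonoidHom
  refine ⟨L'.comp (q.comp (PontryaginDual.evalHom a)), ?_⟩
  rw [injective_iff_map_eq_one]
  intro χ hχ
  -- unravel: L (mk (arg (χ a))) = 0
  have h0 : L (Submodule.Quotient.mk (Complex.arg ((χ a : Circle) : ℂ))) = 0 := hχ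
  have hmem : Complex.arg ((χ a : Circle) : ℂ) ∈ W := by
    have := hL (a₁ := Submodule.Quotient.mk (Complex.arg ((χ a : Circle) : ℂ))) (a₂ := 0)
      (by simpa using h0)
    exact (Submodule.Quotient.mk_eq_zero W).mp this
  rw [hW, Submodule.mem_span_singleton] at hmem
  obtain ⟨r, hr⟩ := hmem
  -- then (χ a) ^ (2 * r.den) = 1
  have hpow : (χ a) ^ (2 * r.den) = 1 := by
    have hz : χ a = Circle.exp (Complex.arg ((χ a : Circle) : ℂ)) := (Circle.exp_arg _).symm
    have hexp : ∀ (m : ℕ) (t : ℝ), Circle.exp t ^ m = Circle.exp (m * t) := by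
      intro m t
      induction m with
      | zero => simp [Circle.exp_zero]
      | succ m ih => rw [pow_succ, ih, ← Circle.exp_add]; congr 1; push_cast; ring
    rw [hz, hexp]
    have harg : ((2 * r.den : ℕ) : ℝ) * Complex.arg ((χ a : Circle) : ℂ) =
        (r.num : ℤ) * (2 * Real.pi) := by
      rw [← hr]
      have hden : (r.den : ℝ) * (r : ℝ) = (r.num : ℝ) := by
        rw [mul_comm]
        exact_mod_cast congrArg (fun x : ℚ => (x : ℝ)) (Rat.mul_den_eq_num r)
      rw [Rat.smul_def]
      push_cast
      linear_combination (2 * Real.pi) * hden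
    rw [harg, Circle.exp_int_mul_two_pi]
  -- hence χ is torsion, hence trivial
  have hχpow : χ ^ (2 * r.den) = 1 := by
    apply heval
    rw [map_pow]
    rw [map_one]; exact hpow
  exact PontryaginDual.eq_one_of_pow χ (by positivity) hχpow
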